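/- Let G be a finite connected simple graph with minimum degree at least 2 and girth at least 5 (every cycle of G has length at least 5). Then every vertex cover of G is an MEG-set of G. -/

import Mathlib

open SimpleGraph

lemma triangle_false {V : Type*} {G : SimpleGraph V} (hg : 5 ≤ G.egirth)
    {u v w : V} (h1 : G.Adj u v) (h2 : G.Adj v w) (h3 : G.Adj w u) : False := by
  have huv := h1.ne
  have hvw := h2.ne
  have hwu := h3.ne
  have huw : u ≠ w := fun h => G.loopless.irrefl u (h ▸ h3)
  let p : G.Walk u u := .cons h1 (.cons h2 (.cons h3 .nil))
  have hc : p.IsCycle := by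
    rw [SimpleGraph.Walk.isCycle_def]
    refine ⟨?_, by simp [p], ?_⟩
    · rw [SimpleGraph.Walk.isTrail_def]
      simp [p, Sym2.eq_iff]
      tauto
    · simp [p]
      tauto
  have := SimpleGraph.le_egirth.mp hg u p hc
  simp [p] at this
  norm_num at this

lemma square_false {V : Type*} {G : SimpleGraph V} (hg : 5 ≤ G.egirth)
    {a b c d : V} (h1 : G.Adj a b) (h2 : G.Adj b c) (h3 : G.Adj c d) (h4 : G.Adj d a)
    (hac : a ≠ c) (hbd : b ≠ d) : False := by
  have hab := h1.ne
  have hbc := h2.ne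
  have hcd := h3.ne
  have hda := h4.ne
  let p : G.Walk a a := .cons h1 (.cons h2 (.cons h3 (.cons h4 .nil)))
  have hc : p.IsCycle := by
    rw [SimpleGraph.Walk.isCycle_def]
    refine ⟨?_, by simp [p], ?_⟩
    · rw [SimpleGraph.Walk.isTrail_def]
      simp [p, Sym2.eq_iff]
      tauto
    · simp [p]
      tauto
  have := SimpleGraph.le_egirth.mp hg a p hc
  simp [p] at this
  norm_num at this

/-- A pair of vertices `u`, `v` monitors an edge `e` if `u` and `v` are reachable from
each other and `e` belongs to every shortest path (walk of length `G.dist u v`)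
between `u` and `v`. -/
def Monitors {V : Type*} (G : SimpleGraph V) (u v : V) (e : Sym2 V) : Prop :=
  G.Reachable u v ∧ ∀ p : G.Walk u v, p.length = G.dist u v → e ∈ p.edges

/-- A monitoring edge-geodetic set of `G`: every edge of `G` is monitored by some
pair of vertices of `M`. -/
def IsMEGSet {V : Type*} (G : SimpleGraph V) (M : Set V) : Prop :=
  ∀ e ∈ G.edgeSet, ∃ u ∈ M, ∃ v ∈ M, Monitors G u v e

/-- The monitoring edge-geodetic number of `G`: the minimum size of an MEG-set. -/
noncomputable def meg {V : Type*} [Fintype V] (G : SimpleGraph V) : ℕ :=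
  sInf {n : ℕ | ∃ M : Finset V, IsMEGSet G ↑M ∧ M.card = n}

lemma cover_monitor_aux {V : Type*} [Fintype V] (G : SimpleGraph V)
    [DecidableRel G.Adj] (hconn : G.Connected)
    (hdeg : ∀ v : V, 2 ≤ G.degree v) (hgirth : 5 ≤ G.egirth)
    (C : Set V) (hC : ∀ u v : V, G.Adj u v → u ∈ C ∨ v ∈ C)
    {u v : V} (huv : G.Adj u v) (hu : u ∈ C) :
    ∃ a ∈ C, ∃ b ∈ C, Monitors G a b s(u, v) := by
  by_cases hv : v ∈ C
  · refine ⟨u, hu, v, hv, huv.reachable, fun p hp => ?_⟩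
    rw [SimpleGraph.dist_eq_one_iff_adj.mpr huv] at hp
    cases p with
    | nil => simp at hp
    | cons h q =>
      rename_i x
      simp at hp
      have hx : x = v := hp.eq
      subst hx
      simp
  · -- pick neighbor w ≠ u of v
    have hcard : 1 < (G.neighborFinset v).card := by
      rw [SimpleGraph.card_neighborFinset_eq_degree]; exact hdeg v
    obtain ⟨w, hwmem, hwu⟩ := Finset.exists_mem_ne hcard u
    rw [SimpleGraph.mem_neighborFinset] at hwmem
    have hw : w ∈ C := (hC v w hwmem).resolve_left hv
    have huw : u ≠ w := Ne.symm hwu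
    have hnadj : ¬ G.Adj u w := fun h => triangle_false hgirth huv hwmem h.symm
    have hdist : G.dist u w = 2 := by
      have hle : G.dist u w ≤ 2 := by
        simpa using G.dist_le (SimpleGraph.Walk.cons huv (SimpleGraph.Walk.cons hwmem SimpleGraph.Walk.nil))
      have h0 : G.dist u w ≠ 0 := fun h =>
        huw ((SimpleGraph.dist_eq_zero_iff_eq_or_not_reachable.mp h).resolve_right
          (not_not_intro (hconn u w)))
      have h1 : G.dist u w ≠ 1 := fun h => hnadj (SimpleGraph.dist_eq_one_iff_adj.mp h)
      omega
    refine ⟨u, hu, w, hw, hconn u w, fun p hp => ?_⟩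
    rw [hdist] at hp
    cases p with
    | nil => simp at hp
    | cons h q =>
      rename_i x
      cases q with
      | nil => simp at hp
      | cons h' r =>
        rename_i y
        simp at hp
        have hy : y = w := hp.eq
        subst hy
        have hx : x = v := by
          by_contra hxv
          exact square_false hgirth huv hwmem h'.symm h.symm huw (fun hvx => hxv hvx.symm)
        subst hx
        simp

/-- in a connected graph with minimum degree at least 2 and girth at
least 5, every vertex cover is an MEG-set. -/
theorem vertexCover_isMEGSet {V : Type*} [Fintype V] (G : SimpleGraph V)
    [DecidableRel G.Adj] (hconn : G.Connected)
    (hdeg : ∀ v : V, 2 ≤ G.degree v) (hgirth : 5 ≤ G.egirth)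
    (C : Set V) (hC : ∀ u v : V, G.Adj u v → u ∈ C ∨ v ∈ C) :
    IsMEGSet G C := by
  intro e he
  induction e using Sym2.ind with
  | _ u v =>
    rw [SimpleGraph.mem_edgeSet] at he
    rcases hC u v he with hu | hv
    · exact cover_monitor_aux G hconn hdeg hgirth C hC he hu
    · have h := cover_monitor_aux G hconn hdeg hgirth C hC he.symm hv
      rw [show s(u, v) = s(v, u) from Sym2.eq_swap]
      exact h
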